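/- Let x^{ε,τ} be a discretized solution with initial datum x₀. Then for all 0 ≤ s ≤ t ≤ T one has Diss_Ψ(x^{ε,τ};[s,t]) < ∞, the function r ↦ ∂_t E(r, x^{ε,τ}(r)) is integrable on (0,T), and E(t, x^{ε,τ}(t)) − E(s, x^{ε,τ}(s)) ≤ ∫_s^t ∂_t E(r, x^{ε,τ}(r)) dr − Diss_Ψ(x^{ε,τ};[s,t]). -/

import Mathlib

open Filter MeasureTheory Set
open scoped Topology NNReal

section Setup

variable {X : Type*} [NormedAddCommGroup X] [NormedSpace ℝ X]

/-- The set of partition sums defining the `Ψ`-dissipation of `u` on `[a,b]`: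
sums `∑ Ψ(u(s_i) − u(s_{i−1}))` over finite strictly increasing partitions
`a = s₀ < s₁ < ⋯ < s_n = b`. -/
def dissSums (Ψ : X → ℝ) (u : ℝ → X) (a b : ℝ) : Set ℝ :=
  { S | ∃ (n : ℕ) (σ : Fin (n + 1) → ℝ), StrictMono σ ∧ σ 0 = a ∧ σ (Fin.last n) = b ∧
      S = ∑ i : Fin n, Ψ (u (σ i.succ) - u (σ i.castSucc)) }

/-- The `Ψ`-dissipation `Diss_Ψ(u;[a,b])`. -/
noncomputable def dissTV (Ψ : X → ℝ) (u : ℝ → X) (a b : ℝ) : ℝ :=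
  sSup (dissSums Ψ u a b)

/-- The subdifferential `∂Ψ(0) = {η : ⟨η,v⟩ ≤ Ψ(v) for all v}`. -/
def subdiffZero (Ψ : X → ℝ) : Set (X →L[ℝ] ℝ) :=
  { η | ∀ v, η v ≤ Ψ v }

/-- `inf_{η ∈ ∂Ψ(0)} ‖ξ + η‖_*`, where `‖·‖_*` is the dual (operator) norm. -/
noncomputable def distToSubdiff (Ψ : X → ℝ) (ξ : X →L[ℝ] ℝ) : ℝ :=
  sInf ((fun η => ‖ξ + η‖) '' subdiffZero Ψ)

/-- The cost `Δ_new(t;a,b)`: infimum over Lipschitz paths `γ : [0,1] → X` with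
`γ(0)=a`, `γ(1)=b` of `∫₀¹ Ψ(γ'(s)) + (inf_{z∈∂Ψ(0)} ‖D_xE(t,γ(s))+z‖_*)·‖γ'(s)‖ ds`. -/
noncomputable def deltaNew (DE : ℝ → X → X →L[ℝ] ℝ) (Ψ : X → ℝ) (t : ℝ) (a b : X) : ℝ :=
  sInf { c | ∃ (K : ℝ≥0) (γ : ℝ → X), LipschitzOnWith K γ (Icc 0 1) ∧ γ 0 = a ∧ γ 1 = b ∧
      c = ∫ s in (0:ℝ)..1, (Ψ (deriv γ s) + distToSubdiff Ψ (DE t (γ s)) * ‖deriv γ s‖) }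

/-- The new dissipation `Diss_new(u;[t₁,t₂])`, with prescribed one-sided limit
functions `uL`, `uR`, summing over the jump set the corrections `Δ_new − Ψ`. -/
noncomputable def dissNew (DE : ℝ → X → X →L[ℝ] ℝ) (Ψ : X → ℝ)
    (u uL uR : ℝ → X) (t₁ t₂ : ℝ) : ℝ :=
  dissTV Ψ u t₁ t₂
    + ∑' t : ({ s | ¬ ContinuousAt u s } ∩ Ioo t₁ t₂ : Set ℝ),
        (deltaNew DE Ψ (t : ℝ) (uL (t : ℝ)) (u (t : ℝ)) +
          deltaNew DE Ψ (t : ℝ) (u (t : ℝ)) (uR (t : ℝ))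
          - Ψ (u (t : ℝ) - uL (t : ℝ)) - Ψ (uR (t : ℝ) - u (t : ℝ)))
    + (deltaNew DE Ψ t₁ (u t₁) (uR t₁) - Ψ (uR t₁ - u t₁))
    + (deltaNew DE Ψ t₂ (uL t₂) (u t₂) - Ψ (u t₂ - uL t₂))

/-- `pts` is a discretized solution with initial datum `x₀`, neighborhood size `ε`,
time-step `τ` and `N` steps: `pts 0 = x₀` and each `pts i` minimizes
`x ↦ E(iτ, x) + Ψ(x − pts (i−1))` over the closed ball of radius `ε` around `pts (i−1)`. -/
def IsDiscreteSol (E : ℝ → X → ℝ) (Ψ : X → ℝ) (x₀ : X) (ε τ : ℝ) (N : ℕ)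
    (pts : ℕ → X) : Prop :=
  pts 0 = x₀ ∧ ∀ i : ℕ, 1 ≤ i → i ≤ N →
    ‖pts i - pts (i - 1)‖ ≤ ε ∧
    ∀ x : X, ‖x - pts (i - 1)‖ ≤ ε →
      E ((i : ℝ) * τ) (pts i) + Ψ (pts i - pts (i - 1)) ≤
        E ((i : ℝ) * τ) x + Ψ (x - pts (i - 1))

/-- The piecewise-constant interpolant `x^{ε,τ}`: equal to `pts (i−1)` on
`[(i−1)τ, iτ)` for `i = 1,…,N`, and to `pts N` on `[Nτ, T]`. -/
noncomputable def discInterp (pts : ℕ → X) (τ : ℝ) (N : ℕ) (t : ℝ) : X :=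
  pts (min N ⌊t / τ⌋₊)

end Setup

section Aux
variable {X : Type*} [NormedAddCommGroup X] [NormedSpace ℝ X]

lemma myPsiZero (Ψ : X → ℝ) (hΨhom : ∀ c : ℝ, 0 ≤ c → ∀ v : X, Ψ (c • v) = c * Ψ v) :
    Ψ 0 = 0 := by
  have := hΨhom 0 le_rfl 0
  simpa using this

lemma myPsiSubadd (Ψ : X → ℝ) (hΨconv : ConvexOn ℝ Set.univ Ψ)
    (hΨhom : ∀ c : ℝ, 0 ≤ c → ∀ v : X, Ψ (c • v) = c * Ψ v) (a b : X) :
    Ψ (a + b) ≤ Ψ a + Ψ b := by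
  have h := hΨconv.2 (mem_univ a) (mem_univ b)
    (by norm_num : (0:ℝ) ≤ 1/2) (by norm_num : (0:ℝ) ≤ 1/2) (by norm_num)
  have h2 : Ψ (a + b) = 2 * Ψ ((1/2:ℝ) • a + (1/2:ℝ) • b) := by
    rw [← hΨhom 2 (by norm_num)]
    congr 1
    module
  rw [smul_eq_mul, smul_eq_mul] at h
  linarith

lemma myPsiTeles (Ψ : X → ℝ) (hΨconv : ConvexOn ℝ Set.univ Ψ)
    (hΨhom : ∀ c : ℝ, 0 ≤ c → ∀ v : X, Ψ (c • v) = c * Ψ v)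
    (pts : ℕ → X) : ∀ {p q : ℕ}, p ≤ q →
    Ψ (pts q - pts p) ≤ (∑ j ∈ Finset.range q, Ψ (pts (j+1) - pts j))
      - ∑ j ∈ Finset.range p, Ψ (pts (j+1) - pts j) := by
  intro p q hpq
  rw [← Finset.sum_Ico_eq_sub _ hpq]
  induction q, hpq using Nat.le_induction with
  | base => simp [myPsiZero Ψ hΨhom]
  | succ q hq ih =>
    rw [Finset.sum_Ico_succ_top hq]
    have h1 : Ψ (pts (q+1) - pts p) ≤ Ψ (pts (q+1) - pts q) + Ψ (pts q - pts p) := by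
      have := myPsiSubadd Ψ hΨconv hΨhom (pts (q+1) - pts q) (pts q - pts p)
      simpa using this
    linarith

lemma finTeles : ∀ {n : ℕ} (G : Fin (n+1) → ℝ),
    ∑ i : Fin n, (G i.succ - G i.castSucc) = G (Fin.last n) - G 0 := by
  intro n
  induction n with
  | zero => intro G; simp
  | succ n ih =>
    intro G
    rw [Fin.sum_univ_castSucc]
    have h := ih (fun j => G j.castSucc)
    simp only [Fin.succ_castSucc] at h ⊢
    rw [h]
    simp [Fin.succ_last]
end Aux

theorem stmt_3
    {X : Type*} [NormedAddCommGroup X] [NormedSpace ℝ X] [FiniteDimensional ℝ X]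
    [Nontrivial X]
    (T : ℝ) (hT : 0 < T)
    (E Et : ℝ → X → ℝ) (DE : ℝ → X → X →L[ℝ] ℝ)
    (hEnn : ∀ t ∈ Set.Icc (0:ℝ) T, ∀ x : X, 0 ≤ E t x)
    (hEt : ∀ x : X, ∀ t ∈ Set.Icc (0:ℝ) T,
      HasDerivWithinAt (fun s => E s x) (Et t x) (Set.Icc 0 T) t)
    (hDE : ∀ t ∈ Set.Icc (0:ℝ) T, ∀ x : X, HasFDerivAt (fun y => E t y) (DE t x) x)
    (hEtc : ContinuousOn (fun p : ℝ × X => Et p.1 p.2) (Set.Icc 0 T ×ˢ Set.univ))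
    (hDEc : ContinuousOn (fun p : ℝ × X => DE p.1 p.2) (Set.Icc 0 T ×ˢ Set.univ))
    (lam : ℝ) (hlam : 0 ≤ lam)
    (hEbound : ∀ s ∈ Set.Icc (0:ℝ) T, ∀ x : X, |Et s x| ≤ lam * E s x)
    (Ψ : X → ℝ) (hΨnn : ∀ v, 0 ≤ Ψ v) (hΨconv : ConvexOn ℝ Set.univ Ψ)
    (hΨhom : ∀ c : ℝ, 0 ≤ c → ∀ v : X, Ψ (c • v) = c * Ψ v)
    (hΨpos : ∀ v : X, v ≠ 0 → 0 < Ψ v)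
    (x₀ : X) (ε τ : ℝ) (hε : 0 < ε) (hτ : 0 < τ)
    (N : ℕ) (hNT : (N : ℝ) * τ ≤ T ∧ T < ((N : ℝ) + 1) * τ)
    (pts : ℕ → X) (hsol : IsDiscreteSol E Ψ x₀ ε τ N pts) :
    ∀ s t : ℝ, 0 ≤ s → s ≤ t → t ≤ T →
      BddAbove (dissSums Ψ (discInterp pts τ N) s t) ∧
      MeasureTheory.IntegrableOn (fun r => Et r (discInterp pts τ N r)) (Set.Ioo 0 T) ∧
      E t (discInterp pts τ N t) - E s (discInterp pts τ N s) ≤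
        (∫ r in s..t, Et r (discInterp pts τ N r)) - dissTV Ψ (discInterp pts τ N) s t := by
  obtain ⟨k, hkdef⟩ : ∃ k : ℝ → ℕ, ∀ r, k r = min N ⌊r / τ⌋₊ := ⟨_, fun _ => rfl⟩
  have hu : ∀ r, discInterp pts τ N r = pts (k r) := by
    intro r; rw [hkdef]; rfl
  obtain ⟨F, hFdef⟩ : ∃ F : ℕ → ℝ, ∀ n, F n = ∑ j ∈ Finset.range n, Ψ (pts (j+1) - pts j) :=
    ⟨_, fun _ => rfl⟩
  have hFmono : Monotone F := by
    intro a b hab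
    rw [hFdef, hFdef]
    exact Finset.sum_le_sum_of_subset_of_nonneg (Finset.range_subset_range.2 hab)
      (fun j _ _ => hΨnn _)
  have hkmono : Monotone k := by
    intro a b hab
    rw [hkdef, hkdef]
    exact min_le_min le_rfl (Nat.floor_mono (by gcongr))
  have hkN : ∀ r, k r ≤ N := by intro r; rw [hkdef]; exact min_le_left _ _
  have hk_ge : ∀ (i : ℕ) (r : ℝ), i ≤ N → (i : ℝ) * τ ≤ r → i ≤ k r := by
    intro i r hiN hir
    rw [hkdef]
    refine le_min hiN (Nat.le_floor ?_)
    rw [le_div_iff₀ hτ]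
    exact hir
  have hk_lt : ∀ (n : ℕ) (r : ℝ), 0 ≤ r → r < (n : ℝ) * τ → k r < n := by
    intro n r hr hrn
    rw [hkdef]
    refine lt_of_le_of_lt (min_le_right _ _) ?_
    rw [Nat.floor_lt (div_nonneg hr hτ.le), div_lt_iff₀ hτ]
    exact hrn
  have hk_nat : ∀ n : ℕ, n ≤ N → k ((n : ℝ) * τ) = n := by
    intro n hn
    have h1 : ((n : ℝ) * τ) / τ = (n : ℝ) := by field_simp
    rw [hkdef, h1, Nat.floor_natCast, min_eq_right hn]
  have hk_le_self : ∀ r : ℝ, 0 ≤ r → (k r : ℝ) * τ ≤ r := by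
    intro r hr
    have h1 : (k r : ℝ) ≤ r / τ := by
      rw [hkdef]
      exact le_trans (Nat.cast_le.2 (min_le_right _ _)) (Nat.floor_le (div_nonneg hr hτ.le))
    calc (k r : ℝ) * τ ≤ (r / τ) * τ := by nlinarith
      _ = r := by field_simp
  -- bound on dissipation sums
  have hbound : ∀ s t : ℝ, ∀ S ∈ dissSums Ψ (discInterp pts τ N) s t,
      S ≤ F (k t) - F (k s) := by
    intro s t S hS
    obtain ⟨n, σ, hσmono, hσ0, hσl, rfl⟩ := hS
    have hstep : ∀ i : Fin n,
        Ψ (discInterp pts τ N (σ i.succ) - discInterp pts τ N (σ i.castSucc)) ≤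
          F (k (σ i.succ)) - F (k (σ i.castSucc)) := by
      intro i
      have hle : σ i.castSucc ≤ σ i.succ := (hσmono Fin.castSucc_lt_succ).le
      have hkle : k (σ i.castSucc) ≤ k (σ i.succ) := hkmono hle
      rw [hu, hu, hFdef, hFdef]
      exact myPsiTeles Ψ hΨconv hΨhom pts hkle
    calc ∑ i : Fin n, Ψ (discInterp pts τ N (σ i.succ) - discInterp pts τ N (σ i.castSucc))
        ≤ ∑ i : Fin n, (F (k (σ i.succ)) - F (k (σ i.castSucc))) :=
          Finset.sum_le_sum (fun i _ => hstep i)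
      _ = F (k (σ (Fin.last n))) - F (k (σ 0)) := finTeles (fun j => F (k (σ j)))
      _ = F (k t) - F (k s) := by rw [hσ0, hσl]
  -- continuity of t ↦ Et t x
  have hcont_g : ∀ x : X, ContinuousOn (fun r => Et r x) (Icc 0 T) := by
    intro x
    exact hEtc.comp ((continuous_id.prodMk continuous_const).continuousOn)
      (fun r hr => ⟨hr, mem_univ x⟩)
  have hg_int : ∀ x : X, IntegrableOn (fun r => Et r x) (Icc 0 T) := fun x =>
    (hcont_g x).integrableOn_Icc
  -- global integrability of r ↦ Et r (u r) on Icc 0 T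
  have hf_int : IntegrableOn (fun r => Et r (discInterp pts τ N r)) (Icc 0 T) := by
    have hsub : Icc (0:ℝ) T ⊆ ⋃ i ∈ Finset.range (N+1),
        (Ico ((i:ℝ)*τ) (((i:ℝ)+1)*τ) ∩ Icc 0 T) := by
      intro r hr
      refine mem_iUnion₂.2 ⟨k r, ?_, ⟨hk_le_self r hr.1, ?_⟩, hr⟩
      · simpa using Nat.lt_succ_of_le (hkN r)
      · by_cases hcase : ⌊r / τ⌋₊ ≤ N
        · have hk1 : k r = ⌊r / τ⌋₊ := by rw [hkdef]; exact min_eq_right hcase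
          rw [hk1]
          have h2 : r / τ < (⌊r / τ⌋₊ : ℝ) + 1 := Nat.lt_floor_add_one (r / τ)
          calc r = (r / τ) * τ := by field_simp
            _ < ((⌊r / τ⌋₊ : ℝ) + 1) * τ := by nlinarith
        · have hk1 : k r = N := by rw [hkdef]; exact min_eq_left (le_of_not_ge hcase)
          rw [hk1]
          exact lt_of_le_of_lt hr.2 hNT.2
    refine IntegrableOn.mono_set ?_ hsub
    rw [integrableOn_finset_iUnion]
    intro i _
    have hmeas : MeasurableSet (Ico ((i:ℝ)*τ) (((i:ℝ)+1)*τ) ∩ Icc (0:ℝ) T) :=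
      measurableSet_Ico.inter measurableSet_Icc
    refine ((hg_int (pts (min N i))).mono_set inter_subset_right).congr_fun ?_ hmeas
    intro r hr
    have h1 : ⌊r / τ⌋₊ = i := by
      rw [Nat.floor_eq_iff (div_nonneg hr.2.1 hτ.le)]
      constructor
      · rw [le_div_iff₀ hτ]; exact hr.1.1
      · rw [div_lt_iff₀ hτ]; push_cast; exact hr.1.2
    have hkr : k r = min N i := by rw [hkdef, h1]
    simp only [hu r, hkr]
  -- interval integrability
  have hf_ii : ∀ a b : ℝ, 0 ≤ a → a ≤ b → b ≤ T →
      IntervalIntegrable (fun r => Et r (discInterp pts τ N r)) volume a b := by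
    intro a b ha hab hbT
    rw [intervalIntegrable_iff_integrableOn_Icc_of_le hab]
    exact hf_int.mono_set (Icc_subset_Icc ha hbT)
  -- FTC for fixed x
  have hftc : ∀ (x : X) (a b : ℝ), 0 ≤ a → a ≤ b → b ≤ T →
      E b x - E a x = ∫ ρ in a..b, Et ρ x := by
    intro x a b ha hab hbT
    have hsub : Icc a b ⊆ Icc 0 T := Icc_subset_Icc ha hbT
    have hcont : ContinuousOn (fun ρ => E ρ x) (Icc a b) :=
      fun ρ hρ => ((hEt x ρ (hsub hρ)).continuousWithinAt).mono hsub
    have hderiv : ∀ ρ ∈ Ioo a b, HasDerivWithinAt (fun s => E s x) (Et ρ x) (Ioi ρ) ρ := by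
      intro ρ hρ
      have hρ0 : (0:ℝ) ≤ ρ := le_trans ha hρ.1.le
      have hρ' : ρ ∈ Icc (0:ℝ) T := ⟨hρ0, le_trans hρ.2.le hbT⟩
      have hmem : Icc (0:ℝ) T ∈ 𝓝 ρ :=
        Icc_mem_nhds (lt_of_le_of_lt ha hρ.1) (lt_of_lt_of_le hρ.2 hbT)
      exact ((hEt x ρ hρ').hasDerivAt hmem).hasDerivWithinAt
    have hint : IntervalIntegrable (fun ρ => Et ρ x) volume a b := by
      rw [intervalIntegrable_iff_integrableOn_Icc_of_le hab]
      exact (hg_int x).mono_set hsub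
    exact (intervalIntegral.integral_eq_sub_of_hasDeriv_right_of_le hab hcont hderiv hint).symm
  -- piece lemma
  have hpiece : ∀ a b : ℝ, 0 ≤ a → a ≤ b → b ≤ T → k a = k b →
      E b (discInterp pts τ N b) - E a (discInterp pts τ N a)
        = ∫ r in a..b, Et r (discInterp pts τ N r) := by
    intro a b ha hab hbT hkab
    have hconst : ∀ r ∈ Icc a b, k r = k a :=
      fun r hr => le_antisymm (hkab ▸ hkmono hr.2) (hkmono hr.1)
    have h1 : (∫ r in a..b, Et r (discInterp pts τ N r)) = ∫ r in a..b, Et r (pts (k a)) := by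
      apply intervalIntegral.integral_congr
      intro r hr
      rw [uIcc_of_le hab] at hr
      simp only [hu r, hconst r hr]
    rw [h1, hu a, hu b, hkab]
    exact hftc (pts (k b)) a b ha hab hbT
  -- jump lemma
  have hΨ0 : Ψ 0 = 0 := myPsiZero Ψ hΨhom
  have hjump : ∀ i : ℕ, 1 ≤ i → i ≤ N →
      E ((i:ℝ)*τ) (pts i) + Ψ (pts i - pts (i-1)) ≤ E ((i:ℝ)*τ) (pts (i-1)) := by
    intro i h1 h2
    have := (hsol.2 i h1 h2).2 (pts (i-1)) (by simp [hε.le])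
    simpa [hΨ0] using this
  -- main energy estimate by induction
  have hmain : ∀ d : ℕ, ∀ s t : ℝ, 0 ≤ s → s ≤ t → t ≤ T → k t = k s + d →
      E t (discInterp pts τ N t) - E s (discInterp pts τ N s) ≤
        (∫ r in s..t, Et r (discInterp pts τ N r)) - (F (k t) - F (k s)) := by
    intro d
    induction d with
    | zero =>
      intro s t hs hst htT hkt
      have heq := hpiece s t hs hst htT (by omega)
      rw [hkt]
      simp only [Nat.add_zero]
      linarith [heq]
    | succ d ih =>
      intro s t hs hst htT hkt
      have hst0 : (0:ℝ) ≤ t := le_trans hs hst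
      obtain ⟨n, hn⟩ : ∃ m : ℕ, k t = m := ⟨k t, rfl⟩
      obtain ⟨p, hpn⟩ : ∃ p : ℕ, p + 1 = n := ⟨n - 1, by omega⟩
      have hn1 : 1 ≤ n := by omega
      have hnN : n ≤ N := hn ▸ hkN t
      have hkt'n : k ((n : ℝ) * τ) = n := hk_nat n hnN
      have ht't : (n : ℝ) * τ ≤ t := by
        have h1 : n ≤ ⌊t / τ⌋₊ := by
          have h2 := hkdef t
          rw [hn] at h2
          omega
        have h3 : (n:ℝ) ≤ t / τ :=
          le_trans (Nat.cast_le.2 h1) (Nat.floor_le (div_nonneg hst0 hτ.le))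
        calc (n:ℝ) * τ ≤ (t / τ) * τ := by nlinarith
          _ = t := by field_simp
      have ht'T : (n : ℝ) * τ ≤ T := le_trans ht't htT
      have ht'0 : (0:ℝ) ≤ (n : ℝ) * τ := by positivity
      have hst' : s < (n : ℝ) * τ := by
        by_contra hcon
        push_neg at hcon
        have h4 : n ≤ k s := hkt'n ▸ hkmono hcon
        omega
      set r : ℝ := max s ((p:ℝ) * τ) with hr
      have hsr : s ≤ r := le_max_left _ _
      have hrt' : r < (n : ℝ) * τ := by
        apply max_lt hst'
        have h5 : (p:ℝ) < (n:ℝ) := by exact_mod_cast (by omega : p < n)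
        nlinarith
      have hr0 : (0:ℝ) ≤ r := le_trans hs hsr
      have hrT : r ≤ T := le_trans hrt'.le ht'T
      have hkr : k r = p := by
        have h1 : p ≤ k r := hk_ge p r (by omega) (le_max_right _ _)
        have h2 : k r < n := hk_lt n r hr0 hrt'
        omega
      have hA1 := ih s r hs hsr hrT (by omega)
      rw [hkr] at hA1
      have hA2 : E ((n : ℝ) * τ) (pts p) - E r (pts p) = ∫ ρ in r..((n : ℝ) * τ), Et ρ (pts p) :=
        hftc (pts p) r ((n : ℝ) * τ) hr0 hrt'.le ht'T
      have hA2' : (∫ ρ in r..((n : ℝ) * τ), Et ρ (discInterp pts τ N ρ))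
          = ∫ ρ in r..((n : ℝ) * τ), Et ρ (pts p) := by
        apply intervalIntegral.integral_congr_ae
        have hne : ∀ᵐ ρ : ℝ, ρ ≠ (n : ℝ) * τ := by
          rw [ae_iff]
          have he : {ρ : ℝ | ¬ ρ ≠ (n : ℝ) * τ} = {(n : ℝ) * τ} := by ext ρ; simp
          rw [he]
          exact measure_singleton _
        filter_upwards [hne] with ρ hρne hρmem
        rw [uIoc_of_le hrt'.le] at hρmem
        have hρlt : ρ < (n : ℝ) * τ := lt_of_le_of_ne hρmem.2 hρne
        have hρ0 : (0:ℝ) ≤ ρ := le_trans hr0 hρmem.1.le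
        have hkρ : k ρ = p := by
          have h1 : p ≤ k ρ := hkr ▸ hkmono hρmem.1.le
          have h2 : k ρ < n := hk_lt n ρ hρ0 hρlt
          omega
        rw [hu ρ, hkρ]
      have hA3 : E ((n : ℝ) * τ) (pts n) + Ψ (pts n - pts p) ≤ E ((n : ℝ) * τ) (pts p) := by
        have h6 := hjump n hn1 hnN
        have h7 : n - 1 = p := by omega
        rwa [h7] at h6
      have hA4 : E t (discInterp pts τ N t) - E ((n : ℝ) * τ) (discInterp pts τ N ((n : ℝ) * τ))
          = ∫ ρ in ((n : ℝ) * τ)..t, Et ρ (discInterp pts τ N ρ) :=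
        hpiece ((n : ℝ) * τ) t ht'0 ht't htT (by rw [hkt'n, hn])
      have hut' : discInterp pts τ N ((n : ℝ) * τ) = pts n := by rw [hu, hkt'n]
      have hut : discInterp pts τ N t = pts n := by rw [hu, hn]
      have hI1 : IntervalIntegrable (fun ρ => Et ρ (discInterp pts τ N ρ)) volume s r :=
        hf_ii s r hs hsr hrT
      have hI2 : IntervalIntegrable (fun ρ => Et ρ (discInterp pts τ N ρ)) volume r ((n : ℝ) * τ) :=
        hf_ii r ((n : ℝ) * τ) hr0 hrt'.le ht'T
      have hI3 : IntervalIntegrable (fun ρ => Et ρ (discInterp pts τ N ρ)) volume ((n : ℝ) * τ) t :=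
        hf_ii ((n : ℝ) * τ) t ht'0 ht't htT
      have hadd1 : (∫ ρ in s..r, Et ρ (discInterp pts τ N ρ))
            + (∫ ρ in r..((n : ℝ) * τ), Et ρ (discInterp pts τ N ρ))
          = ∫ ρ in s..((n : ℝ) * τ), Et ρ (discInterp pts τ N ρ) :=
        intervalIntegral.integral_add_adjacent_intervals hI1 hI2
      have hadd2 : (∫ ρ in s..((n : ℝ) * τ), Et ρ (discInterp pts τ N ρ))
            + (∫ ρ in ((n : ℝ) * τ)..t, Et ρ (discInterp pts τ N ρ))
          = ∫ ρ in s..t, Et ρ (discInterp pts τ N ρ) :=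
        intervalIntegral.integral_add_adjacent_intervals (hI1.trans hI2) hI3
      have hFrel : F n = F p + Ψ (pts (p+1) - pts p) := by
        rw [hFdef, hFdef, ← hpn]
        exact Finset.sum_range_succ _ p
      rw [hpn] at hFrel
      have hur : discInterp pts τ N r = pts p := by rw [hu, hkr]
      rw [hur] at hA1
      rw [hut', hut] at hA4
      rw [hn, hut]
      linarith [hA1, hA2, hA2', hA3, hA4, hadd1, hadd2, hFrel]
  -- assemble
  intro s t hs hst htT
  have hkst : k s ≤ k t := hkmono hst
  refine ⟨⟨F (k t) - F (k s), fun S hS => hbound s t S hS⟩,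
    hf_int.mono_set Ioo_subset_Icc_self, ?_⟩
  have hmainst := hmain (k t - k s) s t hs hst htT (by omega)
  have hdiss_le : dissTV Ψ (discInterp pts τ N) s t ≤ F (k t) - F (k s) := by
    apply Real.sSup_le
    · intro S hS; exact hbound s t S hS
    · have h9 := hFmono hkst; linarith
  linarith [hmainst, hdiss_le]
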